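/- Let 𝐗 be a Polish space with its Borel σ-algebra, 𝐘 a second-countable Hausdorff topological space with its Borel σ-algebra, and f : 𝐗 → 𝐘 a Borel measurable map. Then: (a) for every Borel probability measure μ on 𝐗 there exists a Borel measurable map σ : 𝐘 → 𝐗 such that f(σ(y)) = y for f_*μ-almost all y ∈ 𝐘, where f_*μ is the pushforward of μ under f; and (b) the image f(𝐗) is universally measurable in 𝐘, i.e. it belongs to the completion of the Borel σ-algebra of 𝐘 with respect to every Borel probability measure on 𝐘. -/

import Mathlib

open MeasureTheory Filter Topology Set ENNReal

namespace MeasuredSectionAux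

/-- Finite "box" in Baire space. -/
def Dk (σ : ℕ → ℕ) (k : ℕ) : Set (ℕ → ℕ) := {τ | ∀ i < k, τ i ≤ σ i}

/-- Infinite "box" in Baire space. -/
def Dinf (σ : ℕ → ℕ) : Set (ℕ → ℕ) := {τ | ∀ i, τ i ≤ σ i}

lemma isCompact_Dinf (σ : ℕ → ℕ) : IsCompact (Dinf σ) := by
  have : Dinf σ = Set.pi Set.univ (fun i => Set.Iic (σ i)) := by
    ext τ; simp [Dinf, Set.mem_pi, Pi.le_def]
  rw [this]
  exact isCompact_univ_pi (fun i => (Set.finite_Iic _).isCompact)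

/-- Choquet capacitability for continuous images of Baire space. -/
lemma choquet {Z : Type*} [TopologicalSpace Z] [T2Space Z]
    [FirstCountableTopology Z] [MeasurableSpace Z] [OpensMeasurableSpace Z]
    (ν : Measure Z) [IsFiniteMeasure ν]
    (h : (ℕ → ℕ) → Z) (hh : Continuous h)
    {c : ℝ≥0∞} (hc : c < ν (Set.range h)) :
    ∃ D : Set (ℕ → ℕ), IsCompact D ∧ c ≤ ν (h '' D) := by
  classical
  -- step of the recursion
  have step : ∀ (ρ : ℕ → ℕ) (k : ℕ), c < ν (h '' Dk ρ k) →
      ∃ m : ℕ, c < ν (h '' Dk (Function.update ρ k m) (k + 1)) := by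
    intro ρ k hk
    have hmono : Monotone (fun m => h '' Dk (Function.update ρ k m) (k + 1)) := by
      intro m m' hmm'
      apply image_mono
      intro τ hτ i hi
      have h1 := hτ i hi
      simp only [Function.update_apply] at h1 ⊢
      by_cases hik : i = k
      · simp only [hik, if_true] at h1 ⊢; omega
      · simpa only [hik, if_false] using h1
    have hDU : Dk ρ k = ⋃ m, Dk (Function.update ρ k m) (k + 1) := by
      ext τ
      constructor
      · intro hτ
        refine mem_iUnion.2 ⟨τ k, fun i hi => ?_⟩
        simp only [Function.update_apply]
        by_cases hik : i = k
        · simp [hik]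
        · simp only [hik, if_false]; exact hτ i (by omega)
      · intro hτ
        rcases mem_iUnion.1 hτ with ⟨m, hm⟩
        intro i hi
        have h1 := hm i (by omega)
        simp only [Function.update_apply, if_neg (by omega : ¬ i = k)] at h1
        exact h1
    rw [hDU, image_iUnion, hmono.measure_iUnion] at hk
    exact lt_iSup_iff.1 hk
  choose! M hM using step
  -- the recursively defined bounds
  set σs : ℕ → (ℕ → ℕ) := fun k =>
    Nat.rec (fun _ => 0) (fun k ρ => Function.update ρ k (M ρ k)) k with hσs
  have hσs0 : σs 0 = fun _ => 0 := rfl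
  have hσsS : ∀ k, σs (k + 1) = Function.update (σs k) k (M (σs k) k) := fun k => rfl
  have inv : ∀ k, c < ν (h '' Dk (σs k) k) := by
    intro k
    induction k with
    | zero =>
      have : Dk (σs 0) 0 = univ := by ext τ; simp [Dk]
      rw [this, image_univ]; exact hc
    | succ k ih =>
      rw [hσsS k]
      exact hM (σs k) k ih
  have agree : ∀ k j, k ≤ j → ∀ i < k, σs j i = σs k i := by
    intro k j hkj
    induction j, hkj using Nat.le_induction with
    | base => intro i _; rfl
    | succ j hkj ih =>
      intro i hi
      rw [hσsS j, Function.update_of_ne (by omega)]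
      exact ih i hi
  set σ : ℕ → ℕ := fun i => σs (i + 1) i with hσ
  have hDkσ : ∀ k, Dk σ k = Dk (σs k) k := by
    intro k
    ext τ
    constructor <;> intro hτ i hi
    · rw [agree (i + 1) k (by omega) i (by omega)]
      exact hτ i hi
    · show τ i ≤ σs (i + 1) i
      rw [← agree (i + 1) k (by omega) i (by omega)]
      exact hτ i hi
  have invσ : ∀ k, c < ν (h '' Dk σ k) := fun k => by rw [hDkσ k]; exact inv k
  refine ⟨Dinf σ, isCompact_Dinf σ, ?_⟩
  -- the decreasing closed sets
  set C : ℕ → Set Z := fun k => closure (h '' Dk σ k) with hC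
  have hCanti : Antitone C := by
    intro k k' hkk'
    exact closure_mono (image_mono fun τ hτ i hi => hτ i (lt_of_lt_of_le hi hkk'))
  have hkey : (⋂ k, C k) ⊆ h '' Dinf σ := by
    intro x hx
    obtain ⟨V, hV⟩ := (𝓝 x).exists_antitone_basis
    have hxk : ∀ k, ∃ τ, τ ∈ Dk σ k ∧ h τ ∈ V k := by
      intro k
      have hx' : x ∈ closure (h '' Dk σ k) := mem_iInter.1 hx k
      rcases mem_closure_iff_nhds.1 hx' (V k) (hV.1.mem_of_mem trivial) with ⟨y, hyV, hyS⟩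
      rcases hyS with ⟨τ, hτ, rfl⟩
      exact ⟨τ, hτ, hyV⟩
    choose τs hτs1 hτs2 using hxk
    set b : ℕ → ℕ := fun i => max (σ i) (Finset.sup (Finset.range (i + 1)) (fun k => τs k i))
    have hb : ∀ k, τs k ∈ Dinf b := by
      intro k i
      rcases le_or_gt k i with hk | hk
      · exact le_max_of_le_right (Finset.le_sup (f := fun k => τs k i) (Finset.mem_range.2 (by omega)))
      · exact le_max_of_le_left (hτs1 k i hk)
    obtain ⟨τ, hτb, φ, hφ, hlim⟩ := (isCompact_Dinf b).tendsto_subseq hb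
    have hτσ : τ ∈ Dinf σ := by
      intro i
      have hev : Tendsto (fun j => τs (φ j) i) atTop (𝓝 (τ i)) :=
        ((continuous_apply i).tendsto τ).comp hlim
      have hcl : IsClosed {n : ℕ | n ≤ σ i} := isClosed_discrete _
      have hmem : ∀ᶠ j in atTop, τs (φ j) i ∈ {n : ℕ | n ≤ σ i} := by
        filter_upwards [eventually_ge_atTop (i + 1)] with j hj
        exact hτs1 (φ j) i (lt_of_lt_of_le (Nat.lt_succ_self i) (hj.trans (hφ.le_apply)))
      exact hcl.mem_of_tendsto hev hmem
    have h1 : Tendsto (fun j => h (τs (φ j))) atTop (𝓝 (h τ)) := (hh.tendsto τ).comp hlim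
    have h2 : Tendsto (fun j => h (τs (φ j))) atTop (𝓝 x) := by
      apply hV.tendsto
      intro j
      exact hV.antitone hφ.le_apply (hτs2 (φ j))
    exact ⟨τ, hτσ, tendsto_nhds_unique h1 h2⟩
  have hCm : ∀ k, NullMeasurableSet (C k) ν :=
    fun k => isClosed_closure.measurableSet.nullMeasurableSet
  have hCinter : ν (⋂ k, C k) = ⨅ k, ν (C k) :=
    hCanti.measure_iInter hCm ⟨0, measure_ne_top ν _⟩
  calc c ≤ ⨅ k, ν (C k) :=
        le_iInf fun k => le_of_lt (lt_of_lt_of_le (invσ k) (measure_mono subset_closure))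
    _ = ν (⋂ k, C k) := hCinter.symm
    _ ≤ ν (h '' Dinf σ) := measure_mono hkey

end MeasuredSectionAux
namespace MeasuredSectionAux

/-- Measurable section of a continuous map on a compact subset of Baire space. -/
lemma compact_section {Z : Type*} [TopologicalSpace Z] [T2Space Z]
    [MeasurableSpace Z] [OpensMeasurableSpace Z]
    (h : (ℕ → ℕ) → Z) (hh : Continuous h) {D : Set (ℕ → ℕ)} (hD : IsCompact D) :
    ∃ s : Z → (ℕ → ℕ), Measurable s ∧ ∀ y ∈ h '' D, s y ∈ D ∧ h (s y) = y := by
  classical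
  -- iterated minimization: `P k y` records the first `k` minimal values
  obtain ⟨P, hP0, hPS⟩ : ∃ P : ℕ → Z → (ℕ → ℕ), (∀ y, P 0 y = fun _ => 0) ∧
      ∀ k y, P (k + 1) y = Function.update (P k y) k
        (sInf ((fun τ => τ k) '' {τ | τ ∈ D ∧ h τ = y ∧ ∀ i < k, τ i = P k y i})) :=
    ⟨fun k => Nat.rec (fun _ _ => 0)
      (fun k Pk y => Function.update (Pk y) k
        (sInf ((fun τ => τ k) '' {τ | τ ∈ D ∧ h τ = y ∧ ∀ i < k, τ i = Pk y i}))) k,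
      fun _ => rfl, fun _ _ => rfl⟩
  have agree : ∀ k j, k ≤ j → ∀ y, ∀ i < k, P j y i = P k y i := by
    intro k j hkj
    induction j, hkj using Nat.le_induction with
    | base => intro y i _; rfl
    | succ j hkj ih =>
      intro y i hi
      rw [hPS j, Function.update_of_ne (by omega)]
      exact ih y i hi
  set s : Z → ℕ → ℕ := fun y k => P (k + 1) y k with hs_def
  set E : ℕ → Z → Set (ℕ → ℕ) :=
    fun k y => {τ | τ ∈ D ∧ h τ = y ∧ ∀ i < k, τ i = s y i} with hE_def
  have hEP : ∀ k y, {τ | τ ∈ D ∧ h τ = y ∧ ∀ i < k, τ i = P k y i} = E k y := by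
    intro k y
    ext τ
    simp only [hE_def, mem_setOf_eq, and_congr_right_iff]
    intro _ _
    constructor <;> intro hτ i hi
    · exact (hτ i hi).trans (agree (i + 1) k (by omega) y i (by omega))
    · exact (hτ i hi).trans (agree (i + 1) k (by omega) y i (by omega)).symm
  have hsInf : ∀ k y, s y k = sInf ((fun τ => τ k) '' E k y) := by
    intro k y
    show P (k + 1) y k = _
    rw [hPS k y, Function.update_self, hEP]
  have hDclosed : IsClosed D := hD.isClosed
  have hprefix_closed : ∀ (k : ℕ) (w : ℕ → ℕ),
      IsClosed {τ : ℕ → ℕ | ∀ i < k, τ i = w i} := by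
    intro k w
    have : {τ : ℕ → ℕ | ∀ i < k, τ i = w i} =
        ⋂ (i : ℕ) (_ : i < k), (fun τ : ℕ → ℕ => τ i) ⁻¹' {w i} := by
      ext τ; simp
    rw [this]
    exact isClosed_biInter fun i _ =>
      (isClosed_singleton (x := w i)).preimage (continuous_apply i)
  have hEclosed : ∀ k y, IsClosed (E k y) := by
    intro k y
    have heq : E k y = D ∩ ({τ | h τ = y} ∩ {τ | ∀ i < k, τ i = s y i}) := by
      ext τ
      constructor
      · rintro ⟨h1, h2, h3⟩; exact ⟨h1, h2, h3⟩
      · rintro ⟨h1, h2, h3⟩; exact ⟨h1, h2, h3⟩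
    rw [heq]
    exact hDclosed.inter ((isClosed_singleton.preimage hh).inter (hprefix_closed k (s y)))
  have hEcompact : ∀ k y, IsCompact (E k y) := fun k y =>
    hD.of_isClosed_subset (hEclosed k y) (fun τ hτ => hτ.1)
  have hEmono : ∀ k y, E (k + 1) y ⊆ E k y := fun k y τ hτ =>
    ⟨hτ.1, hτ.2.1, fun i hi => hτ.2.2 i (by omega)⟩
  have hEne : ∀ y ∈ h '' D, ∀ k, (E k y).Nonempty := by
    intro y hy k
    induction k with
    | zero =>
      rcases hy with ⟨τ, hτ, rfl⟩
      exact ⟨τ, hτ, rfl, fun i hi => absurd hi (by omega)⟩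
    | succ k ih =>
      have hne : ((fun τ => τ k) '' E k y).Nonempty := ih.image _
      have hmem := Nat.sInf_mem hne
      rw [← hsInf k y] at hmem
      rcases hmem with ⟨τ, hτ, hτk⟩
      refine ⟨τ, hτ.1, hτ.2.1, fun i hi => ?_⟩
      rcases Nat.lt_succ_iff_lt_or_eq.1 hi with hi' | rfl
      · exact hτ.2.2 i hi'
      · exact hτk
  have hsection : ∀ y ∈ h '' D, s y ∈ D ∧ h (s y) = y := by
    intro y hy
    have hne := IsCompact.nonempty_iInter_of_sequence_nonempty_isCompact_isClosed
      (fun k => E k y) (fun k => hEmono k y) (hEne y hy) (hEcompact 0 y) (fun k => hEclosed k y)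
    rcases hne with ⟨τ, hτ⟩
    have hτk : ∀ k, τ ∈ E k y := fun k => mem_iInter.1 hτ k
    have hτs : τ = s y := funext fun k => (hτk (k + 1)).2.2 k (by omega)
    have h0 := hτk 0
    rw [← hτs]
    exact ⟨h0.1, h0.2.1⟩
  -- measurability
  set Q : ℕ → (ℕ → ℕ) → Set Z := fun k w => h '' {τ | τ ∈ D ∧ ∀ i < k, τ i = w i} with hQ_def
  have hQmeas : ∀ k w, MeasurableSet (Q k w) := by
    intro k w
    have hcl : IsClosed {τ : ℕ → ℕ | τ ∈ D ∧ ∀ i < k, τ i = w i} := by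
      have : {τ : ℕ → ℕ | τ ∈ D ∧ ∀ i < k, τ i = w i} =
          D ∩ {τ | ∀ i < k, τ i = w i} := by ext τ; simp [mem_inter_iff]
      rw [this]; exact hDclosed.inter (hprefix_closed k w)
    have hcp : IsCompact {τ : ℕ → ℕ | τ ∈ D ∧ ∀ i < k, τ i = w i} :=
      hD.of_isClosed_subset hcl (fun τ hτ => hτ.1)
    exact (hcp.image hh).isClosed.measurableSet
  have hchar : ∀ (k : ℕ) (w : ℕ → ℕ),
      {y | y ∈ h '' D ∧ ∀ i < k, s y i = w i} =
        (h '' D) ∩ Q k w ∩ ⋂ (j : ℕ) (_ : j < k) (n : ℕ) (_ : n < w j),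
          (Q (j + 1) (Function.update w j n))ᶜ := by
    intro k w
    ext y
    simp only [mem_inter_iff, mem_iInter, mem_setOf_eq, mem_compl_iff]
    constructor
    · rintro ⟨hyD, hw⟩
      refine ⟨⟨hyD, ?_⟩, ?_⟩
      · rcases hEne y hyD k with ⟨τ, hτ⟩
        exact ⟨τ, ⟨hτ.1, fun i hi => by rw [hτ.2.2 i hi, hw i hi]⟩, hτ.2.1⟩
      · intro j hj n hn hyQ
        rcases hyQ with ⟨τ, ⟨hτD, hτpre⟩, hτy⟩
        have hτE : τ ∈ E j y := by
          refine ⟨hτD, hτy, fun i hi => ?_⟩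
          have h1 := hτpre i (by omega)
          rw [Function.update_of_ne (by omega)] at h1
          rw [h1, ← hw i (by omega)]
        have h1 : s y j ≤ τ j := by
          rw [hsInf j y]; exact Nat.sInf_le ⟨τ, hτE, rfl⟩
        have h2 : τ j = n := by
          have := hτpre j (by omega)
          rwa [Function.update_self] at this
        have h3 := hw j hj
        omega
    · rintro ⟨⟨hyD, hyQ⟩, hmin⟩
      refine ⟨hyD, ?_⟩
      intro i
      induction i using Nat.strong_induction_on with
      | _ i ih =>
      intro hi
      rcases hyQ with ⟨τ, ⟨hτD, hτpre⟩, hτy⟩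
      have hτE : τ ∈ E i y := by
        refine ⟨hτD, hτy, fun i' hi' => ?_⟩
        exact (hτpre i' (by omega)).trans (ih i' hi' (by omega)).symm
      have hle : s y i ≤ w i := by
        rw [hsInf i y]
        exact le_trans (Nat.sInf_le ⟨τ, hτE, rfl⟩) (le_of_eq (hτpre i hi))
      rcases lt_or_eq_of_le hle with hlt | heq
      · exfalso
        rcases hEne y hyD (i + 1) with ⟨ρ, hρ⟩
        apply hmin i hi (s y i) hlt
        refine ⟨ρ, ⟨hρ.1, fun i' hi' => ?_⟩, hρ.2.1⟩
        rcases Nat.lt_succ_iff_lt_or_eq.1 hi' with hi'' | rfl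
        · rw [Function.update_of_ne (by omega)]
          exact (hρ.2.2 i' (by omega)).trans (ih i' hi'' (by omega))
        · rw [Function.update_self]
          exact hρ.2.2 i' (by omega)
      · exact heq
  have hsfiber : ∀ (k a : ℕ), MeasurableSet {y | y ∈ h '' D ∧ s y k = a} := by
    intro k a
    have hEq : {y | y ∈ h '' D ∧ s y k = a} =
        ⋃ (v : Fin (k + 1) → ℕ) (_ : v ⟨k, Nat.lt_succ_self k⟩ = a),
          {y | y ∈ h '' D ∧ ∀ i < k + 1,
            s y i = (fun i => if hik : i < k + 1 then v ⟨i, hik⟩ else 0) i} := by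
      ext y
      simp only [mem_iUnion, mem_setOf_eq]
      constructor
      · rintro ⟨hyD, hk⟩
        refine ⟨fun i => s y i.1, by simpa using hk, hyD, fun i hi => ?_⟩
        simp [hi]
      · rintro ⟨v, hv, hyD, hall⟩
        refine ⟨hyD, ?_⟩
        have := hall k (Nat.lt_succ_self k)
        simpa [hv] using this
    rw [hEq]
    refine MeasurableSet.iUnion fun v => MeasurableSet.iUnion fun _ => ?_
    rw [hchar]
    refine ((hD.image hh).isClosed.measurableSet.inter (hQmeas _ _)).inter ?_
    exact MeasurableSet.iInter fun j => MeasurableSet.iInter fun _ =>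
      MeasurableSet.iInter fun n => MeasurableSet.iInter fun _ => (hQmeas _ _).compl
  have hsoff : ∀ y, y ∉ h '' D → ∀ k, s y k = 0 := by
    intro y hy k
    rw [hsInf k y]
    have hEmpty : E k y = ∅ := by
      ext τ
      simp only [hE_def, mem_setOf_eq, mem_empty_iff_false, iff_false, not_and]
      intro hτD hτy
      exact absurd ⟨τ, hτD, hτy⟩ hy
    simp [hEmpty]
  have hsmeas : Measurable s := by
    apply measurable_pi_lambda
    intro k
    apply measurable_to_countable'
    intro a
    have hEq : (fun y => s y k) ⁻¹' {a} =
        {y | y ∈ h '' D ∧ s y k = a} ∪ (if a = 0 then (h '' D)ᶜ else ∅) := by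
      ext y
      simp only [mem_preimage, mem_singleton_iff, mem_union, mem_setOf_eq]
      by_cases hy : y ∈ h '' D
      · constructor
        · intro hk
          exact Or.inl ⟨hy, hk⟩
        · rintro (⟨-, hk⟩ | hmem)
          · exact hk
          · by_cases ha : a = 0 <;> simp [ha, hy] at hmem
      · constructor
        · intro hk
          have ha : a = 0 := by rw [← hk, hsoff y hy k]
          subst ha
          exact Or.inr (by simp [hy])
        · rintro (⟨hyD, -⟩ | hmem)
          · exact absurd hyD hy
          · have ha : a = 0 := by
              by_contra ha
              simp [ha] at hmem
            rw [hsoff y hy k, ha]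
    rw [hEq]
    refine (hsfiber k a).union ?_
    split
    · exact (hD.image hh).isClosed.measurableSet.compl
    · exact MeasurableSet.empty
  exact ⟨s, hsmeas, hsection⟩
lemma borel_eq_of_le {X : Type*} {t t' : TopologicalSpace X}
    (hp : @PolishSpace X t) (hp' : @PolishSpace X t') (hle : t' ≤ t) :
    @borel X t' = @borel X t := by
  letI := t
  haveI := hp
  have h1 := @Continuous.map_borel_eq X X t' hp' t inferInstance inferInstance id
    (continuous_id_of_le hle) Function.surjective_id
  rwa [MeasurableSpace.map_id] at h1

lemma borelSpace_of_le {X : Type*} {t t' : TopologicalSpace X} {m : MeasurableSpace X}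
    (hle : t' ≤ t) (hp : @PolishSpace X t) (hp' : @PolishSpace X t')
    (hm : @BorelSpace X t m) : @BorelSpace X t' m :=
  @BorelSpace.mk X t' m
    ((@BorelSpace.measurable_eq X t m hm).trans (borel_eq_of_le hp hp' hle).symm)

theorem aux {X : Type*} [TopologicalSpace X] [PolishSpace X] [MeasurableSpace X]
    [BorelSpace X] [Nonempty X]
    {Y : Type*} [TopologicalSpace Y] [SecondCountableTopology Y] [T2Space Y]
    [MeasurableSpace Y] [BorelSpace Y]
    (f : X → Y) (hf : Continuous f) :
    (∀ μ : Measure X, IsProbabilityMeasure μ →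
      ∃ σ : Y → X, Measurable σ ∧ ∀ᵐ y ∂(Measure.map f μ), f (σ y) = y) ∧
    (∀ ν : Measure Y, IsProbabilityMeasure ν → NullMeasurableSet (Set.range f) ν) := by
  classical
  haveI : T2Space X := inferInstance
  obtain ⟨g, hgc, hgs⟩ := PolishSpace.exists_nat_nat_continuous_surjective X
  set h : (ℕ → ℕ) → Y := f ∘ g with hh_def
  have hh : Continuous h := hf.comp hgc
  have hrange : Set.range h = Set.range f := by
    rw [hh_def, Set.range_comp, hgs.range_eq, image_univ]
  constructor
  · intro μ hμ
    haveI := hμ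
    have hcap : ∀ n : ℕ, ∃ D : Set (ℕ → ℕ), IsCompact D ∧
        1 - ((n : ℝ≥0∞) + 1)⁻¹ ≤ μ (g '' D) := by
      intro n
      have hlt : 1 - ((n : ℝ≥0∞) + 1)⁻¹ < μ (Set.range g) := by
        rw [hgs.range_eq, measure_univ]
        exact ENNReal.sub_lt_self one_ne_top one_ne_zero (by simp)
      exact choquet μ g hgc hlt
    choose D hDc hDm using hcap
    have hsec : ∀ n : ℕ, ∃ s : Y → (ℕ → ℕ), Measurable s ∧
        ∀ y ∈ h '' D n, s y ∈ D n ∧ h (s y) = y := fun n => compact_section h hh (hDc n)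
    choose s hsm hsy using hsec
    set B : ℕ → Set Y := fun n => h '' D n with hB_def
    have hBmeas : ∀ n, MeasurableSet (B n) := fun n =>
      ((hDc n).image hh).isClosed.measurableSet
    set p : ℕ → Y → Prop := fun n y => y ∈ B n ∨ (n = 0 ∧ y ∉ ⋃ m, B m) with hp_def
    have hex : ∀ y, ∃ n, p n y := by
      intro y
      by_cases hy : y ∈ ⋃ m, B m
      · rcases mem_iUnion.1 hy with ⟨n, hn⟩; exact ⟨n, Or.inl hn⟩
      · exact ⟨0, Or.inr ⟨rfl, hy⟩⟩
    have hpm : ∀ n, MeasurableSet {y | p n y} := by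
      intro n
      have hpe : {y | p n y} = B n ∪ (if n = 0 then (⋃ m, B m)ᶜ else ∅) := by
        ext y
        by_cases hn : n = 0 <;> simp [hp_def, hn]
      rw [hpe]
      refine (hBmeas n).union ?_
      split
      · exact (MeasurableSet.iUnion hBmeas).compl
      · exact MeasurableSet.empty
    refine ⟨fun y => g (s (Nat.find (hex y)) y), ?_, ?_⟩
    · exact Measurable.find (fun n => hgc.measurable.comp (hsm n)) hpm hex
    · have hgood : ∀ y ∈ ⋃ m, B m, f (g (s (Nat.find (hex y)) y)) = y := by
        intro y hy
        have hfind := Nat.find_spec (hex y)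
        rcases hfind with hmem | ⟨-, hnot⟩
        · exact (hsy _ y hmem).2
        · exact absurd hy hnot
      rw [ae_iff]
      have hsubset : {y | ¬ f (g (s (Nat.find (hex y)) y)) = y} ⊆ (⋃ m, B m)ᶜ := by
        intro y hy hy'
        exact hy (hgood y hy')
      refine measure_mono_null hsubset ?_
      rw [Measure.map_apply hf.measurable (MeasurableSet.iUnion hBmeas).compl]
      have hbound : ∀ n : ℕ, μ (f ⁻¹' (⋃ m, B m)ᶜ) ≤ ((n : ℝ≥0∞) + 1)⁻¹ := by
        intro n
        have hsub : f ⁻¹' (⋃ m, B m)ᶜ ⊆ (g '' D n)ᶜ := by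
          intro x hx hxg
          apply hx
          refine mem_iUnion.2 ⟨n, ?_⟩
          show f x ∈ h '' D n
          rw [hh_def, image_comp]
          exact mem_image_of_mem f hxg
        have hmeas : MeasurableSet (g '' D n) := ((hDc n).image hgc).isClosed.measurableSet
        have hinv1 : ((n : ℝ≥0∞) + 1)⁻¹ ≤ 1 := by
          rw [ENNReal.inv_le_one]
          exact le_add_self
        calc μ (f ⁻¹' (⋃ m, B m)ᶜ) ≤ μ ((g '' D n)ᶜ) := measure_mono hsub
          _ = 1 - μ (g '' D n) := prob_compl_eq_one_sub hmeas
          _ ≤ 1 - (1 - ((n : ℝ≥0∞) + 1)⁻¹) := tsub_le_tsub le_rfl (hDm n)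
          _ = ((n : ℝ≥0∞) + 1)⁻¹ := ENNReal.sub_sub_cancel one_ne_top hinv1
      by_contra hne
      obtain ⟨n, hn⟩ := ENNReal.exists_inv_nat_lt hne
      have hmono : ((n : ℝ≥0∞) + 1)⁻¹ ≤ ((n : ℝ≥0∞))⁻¹ :=
        ENNReal.inv_le_inv.2 le_self_add
      exact lt_irrefl _ (lt_of_le_of_lt ((hbound n).trans hmono) hn)
  · intro ν hν
    haveI := hν
    by_cases hA0 : ν (Set.range f) = 0
    · exact NullMeasurableSet.of_null hA0
    · have hcap : ∀ n : ℕ, ∃ D : Set (ℕ → ℕ), IsCompact D ∧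
          ν (Set.range f) - ((n : ℝ≥0∞) + 1)⁻¹ ≤ ν (h '' D) := by
        intro n
        refine choquet ν h hh ?_
        rw [hrange]
        exact ENNReal.sub_lt_self (measure_ne_top ν _) hA0 (by simp)
      choose D hDc hDm using hcap
      set B : Set Y := ⋃ n, h '' D n with hB_def
      have hBmeas : MeasurableSet B :=
        MeasurableSet.iUnion fun n => ((hDc n).image hh).isClosed.measurableSet
      have hBA : B ⊆ Set.range f := by
        rw [← hrange]
        exact iUnion_subset fun n => image_subset_range h (D n)
      have hνB : ν (Set.range f) ≤ ν B := by
        by_contra hlt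
        push_neg at hlt
        have hd0 : ν (Set.range f) - ν B ≠ 0 := by
          rw [Ne, tsub_eq_zero_iff_le]
          exact not_le.2 hlt
        obtain ⟨n, hn⟩ := ENNReal.exists_inv_nat_lt hd0
        have h1 : ν (Set.range f) ≤ ν B + ((n : ℝ≥0∞) + 1)⁻¹ := by
          rw [← tsub_le_iff_right]
          exact (hDm n).trans (measure_mono (subset_iUnion (fun m => h '' D m) n))
        have h2 : ν B + ((n : ℝ≥0∞) + 1)⁻¹ ≤ ν B + ((n : ℝ≥0∞))⁻¹ :=
          add_le_add_right (ENNReal.inv_le_inv.2 le_self_add) _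
        have h3 : ν B + ((n : ℝ≥0∞))⁻¹ < ν B + (ν (Set.range f) - ν B) :=
          ENNReal.add_lt_add_left (measure_ne_top ν B) hn
        rw [add_tsub_cancel_of_le hlt.le] at h3
        exact lt_irrefl _ (lt_of_le_of_lt (h1.trans h2) h3)
      have hdiff : ν (Set.range f \ B) = 0 := by
        apply measure_mono_null (diff_subset_diff_left (subset_toMeasurable ν (Set.range f)))
        have hmd := measure_diff (hBA.trans (subset_toMeasurable ν (Set.range f)))
          hBmeas.nullMeasurableSet (measure_ne_top ν B)
        rw [hmd, measure_toMeasurable]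
        exact tsub_eq_zero_iff_le.2 hνB
      have hBd : Set.range f = B ∪ (Set.range f \ B) := (union_diff_cancel hBA).symm
      rw [hBd]
      exact hBmeas.nullMeasurableSet.union (NullMeasurableSet.of_null hdiff)

end MeasuredSectionAux

open MeasureTheory Filter Topology

/-- **Measured Borel sections and universal measurability of images**
(Lemma `lemma:measured:section`): a Borel map `f` from a standard Borel (Polish) space
into a second-countable Hausdorff space admits, for every Borel probability measure `μ`
on the domain, a Borel section `σ` with `f (σ y) = y` for `f_*μ`-almost all `y`;
moreover the image `f(𝐗) = range f` is universally measurable. -/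
theorem measured_section_and_universally_measurable_image
    {Xs : Type*} [TopologicalSpace Xs] [PolishSpace Xs] [MeasurableSpace Xs] [BorelSpace Xs]
    {Ys : Type*} [TopologicalSpace Ys] [SecondCountableTopology Ys] [T2Space Ys]
    [MeasurableSpace Ys] [BorelSpace Ys]
    (f : Xs → Ys) (hf : Measurable f) :
    (∀ μ : Measure Xs, IsProbabilityMeasure μ →
      ∃ σ : Ys → Xs, Measurable σ ∧ ∀ᵐ y ∂(Measure.map f μ), f (σ y) = y) ∧
    (∀ ν : Measure Ys, IsProbabilityMeasure ν → NullMeasurableSet (Set.range f) ν) := by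
  rcases isEmpty_or_nonempty Xs with hX | hX
  · constructor
    · intro μ hμ
      exfalso
      have h1 : μ Set.univ = 1 := hμ.measure_univ
      rw [Set.univ_eq_empty_iff.2 hX, measure_empty] at h1
      exact zero_ne_one h1
    · intro ν _
      rw [Set.range_eq_empty f]
      exact MeasurableSet.empty.nullMeasurableSet
  · obtain ⟨t', ht'le, hfc, ht'polish⟩ := hf.exists_continuous
    haveI hB : @BorelSpace Xs t' _ :=
      MeasuredSectionAux.borelSpace_of_le ht'le inferInstance ht'polish inferInstance
    exact @MeasuredSectionAux.aux Xs t' ht'polish _ hB hX Ys _ _ _ _ _ f hfc
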